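/- Let H = (V, E) be a 1-Sperner hypergraph with E ≠ ∅ and E ≠ {∅}. Then there exists a vector x : V → ℝ with x(v) ≥ 0 for all v ∈ V such that ∑_{v ∈ e} x(v) = 1 for every hyperedge e ∈ E, and ∑_{v ∈ V} x(v) ≥ 1. -/
import Mathlib


open Finset

/-- A hypergraph with hyperedge set `E` is 1-Sperner if every two distinct
hyperedges `e, f` satisfy `min |e \ f| |f \ e| = 1`. -/
def OneSperner {α : Type*} [DecidableEq α] (E : Finset (Finset α)) : Prop :=
  ∀ e ∈ E, ∀ f ∈ E, e ≠ f → min (e \ f).card (f \ e).card = 1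

section Aux

variable {α : Type*} [DecidableEq α]

lemma aux_card_sdiff_le {e f : Finset α} (hle : e.card ≤ f.card) :
    (e \ f).card ≤ (f \ e).card := by
  have h1 := Finset.card_sdiff_add_card_inter e f
  have h2 := Finset.card_sdiff_add_card_inter f e
  rw [Finset.inter_comm] at h2
  omega

lemma aux_sdiff_card_one {e f : Finset α}
    (hmin : min (e \ f).card (f \ e).card = 1) (hle : e.card ≤ f.card) :
    (e \ f).card = 1 := by
  have := aux_card_sdiff_le hle
  omega

lemma aux_eq_singleton {s : Finset α} {z : α} (h : s.card = 1) (hz : z ∈ s) :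
    s = {z} := by
  rw [Finset.card_eq_one] at h
  obtain ⟨a, rfl⟩ := h
  rw [Finset.mem_singleton] at hz
  subst hz; rfl

lemma aux_erase_sdiff_erase {e f : Finset α} {z : α} (hzf : z ∈ f) :
    e.erase z \ f.erase z = e \ f := by
  ext v
  simp only [Finset.mem_sdiff, Finset.mem_erase]
  constructor
  · rintro ⟨⟨hvz, hve⟩, hnf⟩
    exact ⟨hve, fun hvf => hnf ⟨hvz, hvf⟩⟩
  · rintro ⟨hve, hvf⟩
    have hvz : v ≠ z := fun h => hvf (h ▸ hzf)
    exact ⟨⟨hvz, hve⟩, fun h => hvf h.2⟩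

lemma aux_sdiff_sdiff {e f W : Finset α} (hWf : W ⊆ f) :
    (e \ W) \ (f \ W) = e \ f := by
  ext v
  simp only [Finset.mem_sdiff]
  constructor
  · rintro ⟨⟨hve, hvW⟩, hnf⟩
    refine ⟨hve, fun hvf => hnf ⟨hvf, hvW⟩⟩
  · rintro ⟨hve, hvf⟩
    have hvW : v ∉ W := fun h => hvf (hWf h)
    exact ⟨⟨hve, hvW⟩, fun h => hvf h.1⟩

/-- Key structural lemma for 1-Sperner hypergraphs: with `f₀` a maximum edge,
`e₀` a minimum edge among the others, and `{z} = e₀ \ f₀`, every edge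
containing `z`, minus `z`, is contained in every edge avoiding `z`. -/
lemma aux_key {E : Finset (Finset α)} (h : OneSperner E)
    {f₀ e₀ : Finset α} (hf₀ : f₀ ∈ E) (hmax : ∀ g ∈ E, g.card ≤ f₀.card)
    (he₀ : e₀ ∈ E) (hne : e₀ ≠ f₀) (hmin : ∀ g ∈ E, g ≠ f₀ → e₀.card ≤ g.card)
    {z : α} (hz : e₀ \ f₀ = {z}) :
    ∀ e ∈ E, z ∈ e → ∀ f ∈ E, z ∉ f → ∀ w ∈ e, w ≠ z → w ∈ f := by
  have hzs : z ∈ e₀ \ f₀ := hz ▸ Finset.mem_singleton_self z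
  have hze₀ : z ∈ e₀ := (Finset.mem_sdiff.mp hzs).1
  have hzf₀ : z ∉ f₀ := (Finset.mem_sdiff.mp hzs).2
  have S1 : ∀ e ∈ E, z ∈ e → e \ f₀ = {z} := by
    intro e heE hze
    have hef₀ : e ≠ f₀ := fun h' => hzf₀ (h' ▸ hze)
    exact aux_eq_singleton
      (aux_sdiff_card_one (h e heE f₀ hf₀ hef₀) (hmax e heE))
      (Finset.mem_sdiff.mpr ⟨hze, hzf₀⟩)
  have S2 : ∀ f ∈ E, z ∉ f → f ≠ f₀ → e₀ \ f = {z} := by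
    intro f hfE hzf hff₀
    have he₀f : e₀ ≠ f := fun h' => hzf (h' ▸ hze₀)
    exact aux_eq_singleton
      (aux_sdiff_card_one (h e₀ he₀ f hfE he₀f) (hmin f hfE hff₀))
      (Finset.mem_sdiff.mpr ⟨hze₀, hzf⟩)
  intro e heE hze f hfE hzf w hwe hwz
  by_contra hwf
  by_cases hef₀ : f = f₀
  · subst hef₀
    have hm : w ∈ e \ f := Finset.mem_sdiff.mpr ⟨hwe, hwf⟩
    rw [S1 e heE hze] at hm
    exact hwz (Finset.mem_singleton.mp hm)
  by_cases hee₀ : e = e₀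
  · subst hee₀
    have hm : w ∈ e \ f := Finset.mem_sdiff.mpr ⟨hwe, hwf⟩
    rw [S2 f hfE hzf hef₀] at hm
    exact hwz (Finset.mem_singleton.mp hm)
  have hef : e ≠ f := fun h' => hzf (h' ▸ hze)
  have hef₀' : e ≠ f₀ := fun h' => hzf₀ (h' ▸ hze)
  -- |e \ f| ≥ 2, hence |f \ e| = 1
  have h2 : 2 ≤ (e \ f).card := by
    have hz' : z ∈ e \ f := Finset.mem_sdiff.mpr ⟨hze, hzf⟩
    have hw' : w ∈ e \ f := Finset.mem_sdiff.mpr ⟨hwe, hwf⟩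
    have hsub : ({z, w} : Finset α) ⊆ e \ f := by
      intro v hv
      rcases Finset.mem_insert.mp hv with rfl | hv
      · exact hz'
      · exact (Finset.mem_singleton.mp hv) ▸ hw'
    have hcard : ({z, w} : Finset α).card = 2 := by
      rw [Finset.card_insert_of_notMem (by simp [Ne.symm hwz]), Finset.card_singleton]
    calc 2 = ({z, w} : Finset α).card := hcard.symm
      _ ≤ _ := Finset.card_le_card hsub
  have hfe1 : (f \ e).card = 1 := by
    have hmm := h e heE f hfE hef
    omega
  -- e₀ \ e = {a}
  have he₀e : e₀ ≠ e := fun h' => hee₀ h'.symm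
  have hcard : (e₀ \ e).card = 1 :=
    aux_sdiff_card_one (h e₀ he₀ e heE he₀e) (hmin e heE hef₀')
  obtain ⟨a, ha⟩ := Finset.card_eq_one.mp hcard
  have hams : a ∈ e₀ \ e := ha ▸ Finset.mem_singleton_self a
  have hae₀ : a ∈ e₀ := (Finset.mem_sdiff.mp hams).1
  have hane : a ∉ e := (Finset.mem_sdiff.mp hams).2
  have haz : a ≠ z := fun h' => hane (h' ▸ hze)
  have haf : a ∈ f := by
    by_contra haf
    have hm : a ∈ e₀ \ f := Finset.mem_sdiff.mpr ⟨hae₀, haf⟩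
    rw [S2 f hfE hzf hef₀] at hm
    exact haz (Finset.mem_singleton.mp hm)
  have hfe : f \ e = {a} :=
    aux_eq_singleton hfe1 (Finset.mem_sdiff.mpr ⟨haf, hane⟩)
  -- f \ f₀ = {y}
  have hcard' : (f \ f₀).card = 1 :=
    aux_sdiff_card_one (h f hfE f₀ hf₀ hef₀) (hmax f hfE)
  obtain ⟨y, hy⟩ := Finset.card_eq_one.mp hcard'
  have hyms : y ∈ f \ f₀ := hy ▸ Finset.mem_singleton_self y
  have hyf : y ∈ f := (Finset.mem_sdiff.mp hyms).1
  have hyf₀ : y ∉ f₀ := (Finset.mem_sdiff.mp hyms).2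
  have hye : y ∈ e := by
    by_contra hye
    have hm : y ∈ f \ e := Finset.mem_sdiff.mpr ⟨hyf, hye⟩
    rw [hfe] at hm
    have hya : y = a := Finset.mem_singleton.mp hm
    have haf₀ : a ∈ f₀ := by
      by_contra haf₀
      have hm' : a ∈ e₀ \ f₀ := Finset.mem_sdiff.mpr ⟨hae₀, haf₀⟩
      rw [hz] at hm'
      exact haz (Finset.mem_singleton.mp hm')
    exact hyf₀ (hya ▸ haf₀)
  have hm : y ∈ e \ f₀ := Finset.mem_sdiff.mpr ⟨hye, hyf₀⟩
  rw [S1 e heE hze] at hm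
  exact hzf ((Finset.mem_singleton.mp hm) ▸ hyf)

lemma aux_main {α : Type*} [DecidableEq α] :
    ∀ (n : ℕ) (V : Finset α) (E : Finset (Finset α)), V.card ≤ n →
      (∀ e ∈ E, e ⊆ V) → OneSperner E → E ≠ ∅ → E ≠ ({∅} : Finset (Finset α)) →
      ∃ x : α → ℝ, (∀ v ∈ V, 0 ≤ x v) ∧ (∀ e ∈ E, ∑ v ∈ e, x v = 1) ∧
        1 ≤ ∑ v ∈ V, x v := by
  intro n
  induction n with
  | zero =>
    intro V E hV hEV h hne hne'
    exfalso
    have hV0 : V = ∅ := Finset.card_eq_zero.mp (Nat.le_zero.mp hV)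
    apply hne'
    obtain ⟨e, he⟩ := Finset.nonempty_iff_ne_empty.mpr hne
    have hall : ∀ f ∈ E, f = ∅ := by
      intro f hf
      have : f ⊆ ∅ := hV0 ▸ hEV f hf
      exact Finset.subset_empty.mp this
    exact Finset.eq_singleton_iff_unique_mem.mpr ⟨(hall e he) ▸ he, hall⟩
  | succ n ih =>
    intro V E hV hEV h hne hne'
    classical
    have hEne : E.Nonempty := Finset.nonempty_iff_ne_empty.mpr hne
    -- ∅ is not an edge
    have hempty : ∅ ∉ E := by
      intro hmem0
      have hex : ∃ e ∈ E, e ≠ ∅ := by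
        by_contra h'
        push_neg at h'
        exact hne' (Finset.eq_singleton_iff_unique_mem.mpr ⟨hmem0, h'⟩)
      obtain ⟨e, heE, he0⟩ := hex
      have := h ∅ hmem0 e heE (fun h' => he0 h'.symm)
      simp [Finset.empty_sdiff] at this
    by_cases hsing : ∃ e, E = {e}
    · -- single edge
      obtain ⟨e, rfl⟩ := hsing
      have he0 : e ≠ ∅ := fun h' => hne' (by rw [h'])
      obtain ⟨v, hv⟩ := Finset.nonempty_iff_ne_empty.mpr he0
      refine ⟨fun w => if w = v then 1 else 0, ?_, ?_, ?_⟩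
      · intro w _
        dsimp only
        split <;> norm_num
      · intro f hf
        rw [Finset.mem_singleton] at hf
        subst hf
        rw [Finset.sum_ite_eq' f v (fun _ => (1 : ℝ))]
        simp [hv]
      · have hvV : v ∈ V := hEV e (Finset.mem_singleton_self e) hv
        have h1 : (if v = v then (1:ℝ) else 0) ≤ ∑ w ∈ V, (if w = v then (1:ℝ) else 0) := by
          apply Finset.single_le_sum (f := fun w => if w = v then (1:ℝ) else 0)
          · intro i _; split <;> norm_num
          · exact hvV
        simpa using h1
    · -- at least two edges
      obtain ⟨f₀, hf₀, hmax⟩ := Finset.exists_max_image E Finset.card hEne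
      have hEe : (E.erase f₀).Nonempty := by
        rw [Finset.nonempty_iff_ne_empty]
        intro h'
        rcases (Finset.erase_eq_empty_iff E f₀).mp h' with h'' | h''
        · exact hne h''
        · exact hsing ⟨f₀, h''⟩
      obtain ⟨e₀, he₀', hmin⟩ := Finset.exists_min_image (E.erase f₀) Finset.card hEe
      have he₀ : e₀ ∈ E := Finset.mem_of_mem_erase he₀'
      have he₀f₀ : e₀ ≠ f₀ := Finset.ne_of_mem_erase he₀'
      have hmin' : ∀ g ∈ E, g ≠ f₀ → e₀.card ≤ g.card := fun g hg hg' =>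
        hmin g (Finset.mem_erase.mpr ⟨hg', hg⟩)
      have hc1 : (e₀ \ f₀).card = 1 :=
        aux_sdiff_card_one (h e₀ he₀ f₀ hf₀ he₀f₀) (hmax e₀ he₀)
      obtain ⟨z, hz⟩ := Finset.card_eq_one.mp hc1
      have hzs : z ∈ e₀ \ f₀ := hz ▸ Finset.mem_singleton_self z
      have hze₀ : z ∈ e₀ := (Finset.mem_sdiff.mp hzs).1
      have hzf₀ : z ∉ f₀ := (Finset.mem_sdiff.mp hzs).2
      have hzV : z ∈ V := hEV e₀ he₀ hze₀
      have K := aux_key h hf₀ hmax he₀ he₀f₀ hmin' hz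
      set Ez : Finset (Finset α) := E.filter (fun e => z ∈ e) with hEz
      set W : Finset α := Ez.biUnion (fun e => e.erase z) with hW
      have he₀Ez : e₀ ∈ Ez := Finset.mem_filter.mpr ⟨he₀, hze₀⟩
      have hzW : z ∉ W := by
        simp only [hW, Finset.mem_biUnion]
        rintro ⟨e, _, he⟩
        exact (Finset.mem_erase.mp he).1 rfl
      have hWV : W ⊆ V.erase z := by
        intro v hv
        simp only [hW, Finset.mem_biUnion] at hv
        obtain ⟨e, heEz, hve⟩ := hv
        have heE : e ∈ E := (Finset.mem_filter.mp heEz).1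
        exact Finset.mem_erase.mpr
          ⟨(Finset.mem_erase.mp hve).1, hEV e heE (Finset.mem_of_mem_erase hve)⟩
      have heW : ∀ e ∈ E, z ∈ e → e.erase z ⊆ W := by
        intro e heE hze v hv
        exact Finset.mem_biUnion.mpr ⟨e, Finset.mem_filter.mpr ⟨heE, hze⟩, hv⟩
      have hWf : ∀ f ∈ E, z ∉ f → W ⊆ f := by
        intro f hfE hzf v hv
        simp only [hW, Finset.mem_biUnion] at hv
        obtain ⟨e, heEz, hve⟩ := hv
        obtain ⟨heE, hze⟩ := Finset.mem_filter.mp heEz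
        exact K e heE hze f hfE hzf v (Finset.mem_of_mem_erase hve)
          (Finset.mem_erase.mp hve).1
      have hcardV : (V.erase z).card ≤ n := by
        have := Finset.card_erase_of_mem hzV
        have hV1 : 1 ≤ V.card := Finset.card_pos.mpr ⟨z, hzV⟩
        omega
      by_cases hcase : ∃ f ∈ E, z ∉ f ∧ f ⊆ W
      · -- Case C-ii : W itself is an edge, and the only edge avoiding z
        obtain ⟨fh, hfhE, hzfh, hfhW⟩ := hcase
        have hfhW' : fh = W := Finset.Subset.antisymm hfhW (hWf fh hfhE hzfh)
        have hWE : W ∈ E := hfhW' ▸ hfhE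
        have hzWE : z ∉ W := hzW
        have hEc : ∀ f ∈ E, z ∉ f → f = W := by
          intro f hfE hzf
          by_contra hfW
          have hWsub : W ⊆ f := hWf f hfE hzf
          have := h W hWE f hfE (fun h' => hfW h'.symm)
          rw [Finset.sdiff_eq_empty_iff_subset.mpr hWsub] at this
          simp at this
        set E₁ : Finset (Finset α) := Ez.image (fun e => e.erase z) with hE₁
        have hE₁V : ∀ e' ∈ E₁, e' ⊆ V.erase z := by
          intro e' he'
          obtain ⟨e, heEz, rfl⟩ := Finset.mem_image.mp he'
          have heE : e ∈ E := (Finset.mem_filter.mp heEz).1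
          intro v hv
          exact Finset.mem_erase.mpr
            ⟨(Finset.mem_erase.mp hv).1, hEV e heE (Finset.mem_of_mem_erase hv)⟩
        have hE₁S : OneSperner E₁ := by
          intro e' he' f' hf' hne''
          obtain ⟨e, heEz, rfl⟩ := Finset.mem_image.mp he'
          obtain ⟨f, hfEz, rfl⟩ := Finset.mem_image.mp hf'
          obtain ⟨heE, hze⟩ := Finset.mem_filter.mp heEz
          obtain ⟨hfE, hzf⟩ := Finset.mem_filter.mp hfEz
          have hef : e ≠ f := fun h' => hne'' (by rw [h'])
          rw [aux_erase_sdiff_erase hzf, aux_erase_sdiff_erase hze]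
          exact h e heE f hfE hef
        have hE₁ne : E₁ ≠ ∅ := by
          apply Finset.nonempty_iff_ne_empty.mp
          exact ⟨e₀.erase z, Finset.mem_image.mpr ⟨e₀, he₀Ez, rfl⟩⟩
        have hE₁ne' : E₁ ≠ ({∅} : Finset (Finset α)) := by
          intro h'
          have hW0 : W = ∅ := by
            rw [Finset.eq_empty_iff_forall_notMem]
            intro v hv
            simp only [hW, Finset.mem_biUnion] at hv
            obtain ⟨e, heEz, hve⟩ := hv
            have : e.erase z ∈ E₁ := Finset.mem_image.mpr ⟨e, heEz, rfl⟩
            rw [h', Finset.mem_singleton] at this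
            rw [this] at hve
            exact Finset.notMem_empty v hve
          rw [hW0] at hWE
          exact hempty hWE
        obtain ⟨x₁, hx₁0, hx₁e, _⟩ :=
          ih (V.erase z) E₁ hcardV hE₁V hE₁S hE₁ne hE₁ne'
        set T : ℝ := ∑ v ∈ W, x₁ v with hT
        have he₀W : e₀.erase z ⊆ W := heW e₀ he₀ hze₀
        have hT1 : 1 ≤ T := by
          have hsum : ∑ v ∈ e₀.erase z, x₁ v = 1 :=
            hx₁e (e₀.erase z) (Finset.mem_image.mpr ⟨e₀, he₀Ez, rfl⟩)
          rw [hT, ← hsum]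
          apply Finset.sum_le_sum_of_subset_of_nonneg he₀W
          intro v hv _
          exact hx₁0 v (hWV hv)
        have hT0 : (0:ℝ) < T := lt_of_lt_of_le one_pos hT1
        have hT0' : T ≠ 0 := ne_of_gt hT0
        have hinv : 1/T ≤ 1 := by rw [div_le_one hT0]; exact hT1
        have hxnn : ∀ v : α,
            (0:ℝ) ≤ if v = z then 1 - 1/T else if v ∈ W then x₁ v / T else 0 := by
          intro v
          by_cases h1 : v = z
          · rw [if_pos h1]; linarith
          · rw [if_neg h1]
            by_cases h2 : v ∈ W
            · rw [if_pos h2]; exact div_nonneg (hx₁0 v (hWV h2)) hT0.le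
            · rw [if_neg h2]
        refine ⟨fun v => if v = z then 1 - 1/T else if v ∈ W then x₁ v / T else 0,
          ?_, ?_, ?_⟩
        · intro v _
          exact hxnn v
        · intro e heE
          dsimp only
          by_cases hze : z ∈ e
          · rw [← Finset.add_sum_erase e _ hze]
            have hez : e.erase z ⊆ W := heW e heE hze
            have hs : ∑ v ∈ e.erase z,
                (if v = z then 1 - 1/T else if v ∈ W then x₁ v / T else 0)
                = ∑ v ∈ e.erase z, x₁ v / T := by
              apply Finset.sum_congr rfl
              intro v hv
              rw [if_neg (Finset.mem_erase.mp hv).1, if_pos (hez hv)]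
            rw [hs, if_pos rfl, ← Finset.sum_div,
              hx₁e (e.erase z) (Finset.mem_image.mpr
                ⟨e, Finset.mem_filter.mpr ⟨heE, hze⟩, rfl⟩)]
            ring
          · have heqW : e = W := hEc e heE hze
            rw [heqW]
            have hs : ∑ v ∈ W,
                (if v = z then 1 - 1/T else if v ∈ W then x₁ v / T else 0)
                = ∑ v ∈ W, x₁ v / T := by
              apply Finset.sum_congr rfl
              intro v hv
              rw [if_neg (fun h' : v = z => hzW (h' ▸ hv)), if_pos hv]
            rw [hs, ← Finset.sum_div, ← hT, div_self hT0']
        · dsimp only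
          have hWsubV : W ⊆ V := hWV.trans (Finset.erase_subset z V)
          have hWsum : ∑ v ∈ W,
              (if v = z then 1 - 1/T else if v ∈ W then x₁ v / T else 0) = 1 := by
            have hs : ∑ v ∈ W,
                (if v = z then 1 - 1/T else if v ∈ W then x₁ v / T else 0)
                = ∑ v ∈ W, x₁ v / T := by
              apply Finset.sum_congr rfl
              intro v hv
              rw [if_neg (fun h' : v = z => hzW (h' ▸ hv)), if_pos hv]
            rw [hs, ← Finset.sum_div, ← hT, div_self hT0']
          refine le_trans (le_of_eq hWsum.symm) ?_
          apply Finset.sum_le_sum_of_subset_of_nonneg hWsubV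
          intro v _ _
          exact hxnn v
      · -- Case C-i : no edge avoiding z is contained in W
        push_neg at hcase
        set V₂ : Finset α := (V.erase z) \ W with hV₂
        set E₂ : Finset (Finset α) :=
          (E.filter (fun f => z ∉ f)).image (fun f => f \ W) with hE₂d
        have hcardV₂ : V₂.card ≤ n := by
          have h1 : V₂.card ≤ (V.erase z).card :=
            Finset.card_le_card (Finset.sdiff_subset)
          omega
        have hE₂V : ∀ f' ∈ E₂, f' ⊆ V₂ := by
          intro f' hf'
          obtain ⟨f, hfF, rfl⟩ := Finset.mem_image.mp hf'
          obtain ⟨hfE, hzf⟩ := Finset.mem_filter.mp hfF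
          intro v hv
          obtain ⟨hvf, hvW⟩ := Finset.mem_sdiff.mp hv
          refine Finset.mem_sdiff.mpr ⟨?_, hvW⟩
          exact Finset.mem_erase.mpr ⟨fun h' => hzf (h' ▸ hvf), hEV f hfE hvf⟩
        have hE₂S : OneSperner E₂ := by
          intro e' he' f' hf' hne''
          obtain ⟨e, heF, rfl⟩ := Finset.mem_image.mp he'
          obtain ⟨f, hfF, rfl⟩ := Finset.mem_image.mp hf'
          obtain ⟨heE, hze⟩ := Finset.mem_filter.mp heF
          obtain ⟨hfE, hzf⟩ := Finset.mem_filter.mp hfF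
          have hef : e ≠ f := fun h' => hne'' (by rw [h'])
          rw [aux_sdiff_sdiff (hWf f hfE hzf), aux_sdiff_sdiff (hWf e heE hze)]
          exact h e heE f hfE hef
        have hf₀F : f₀ ∈ E.filter (fun f => z ∉ f) := Finset.mem_filter.mpr ⟨hf₀, hzf₀⟩
        have hE₂ne : E₂ ≠ ∅ := by
          apply Finset.nonempty_iff_ne_empty.mp
          exact ⟨f₀ \ W, Finset.mem_image.mpr ⟨f₀, hf₀F, rfl⟩⟩
        have hE₂ne' : E₂ ≠ ({∅} : Finset (Finset α)) := by
          intro h'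
          have : f₀ \ W ∈ E₂ := Finset.mem_image.mpr ⟨f₀, hf₀F, rfl⟩
          rw [h', Finset.mem_singleton] at this
          exact hcase f₀ hf₀ hzf₀ (Finset.sdiff_eq_empty_iff_subset.mp this)
        obtain ⟨x₂, hx₂0, hx₂e, _⟩ := ih V₂ E₂ hcardV₂ hE₂V hE₂S hE₂ne hE₂ne'
        have hxnn : ∀ v : α,
            (0:ℝ) ≤ if v = z then 1 else if v ∈ V₂ then x₂ v else 0 := by
          intro v
          by_cases h1 : v = z
          · rw [if_pos h1]; norm_num
          · rw [if_neg h1]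
            by_cases h2 : v ∈ V₂
            · rw [if_pos h2]; exact hx₂0 v h2
            · rw [if_neg h2]
        refine ⟨fun v => if v = z then 1 else if v ∈ V₂ then x₂ v else 0, ?_, ?_, ?_⟩
        · intro v _
          exact hxnn v
        · intro e heE
          dsimp only
          by_cases hze : z ∈ e
          · rw [Finset.sum_eq_single_of_mem z hze, if_pos rfl]
            intro b hb hbz
            rw [if_neg hbz, if_neg]
            intro hbV₂
            have hbW : b ∈ W := heW e heE hze (Finset.mem_erase.mpr ⟨hbz, hb⟩)
            exact (Finset.mem_sdiff.mp hbV₂).2 hbW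
          · have hWe : W ⊆ e := hWf e heE hze
            have hsub : ∑ v ∈ e \ W,
                (if v = z then 1 else if v ∈ V₂ then x₂ v else 0)
                = ∑ v ∈ e, (if v = z then 1 else if v ∈ V₂ then x₂ v else 0) := by
              apply Finset.sum_subset (Finset.sdiff_subset)
              intro v hve hvnot
              have hvW : v ∈ W := by
                by_contra hvW
                exact hvnot (Finset.mem_sdiff.mpr ⟨hve, hvW⟩)
              rw [if_neg (fun h' : v = z => hzW (h' ▸ hvW)), if_neg]
              exact fun hvV₂ => (Finset.mem_sdiff.mp hvV₂).2 hvW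
            rw [← hsub]
            have hs : ∑ v ∈ e \ W,
                (if v = z then 1 else if v ∈ V₂ then x₂ v else 0)
                = ∑ v ∈ e \ W, x₂ v := by
              apply Finset.sum_congr rfl
              intro v hv
              obtain ⟨hve, hvW⟩ := Finset.mem_sdiff.mp hv
              have hvz : v ≠ z := fun h' => hze (h' ▸ hve)
              rw [if_neg hvz, if_pos]
              exact Finset.mem_sdiff.mpr
                ⟨Finset.mem_erase.mpr ⟨hvz, hEV e heE hve⟩, hvW⟩
            rw [hs]
            exact hx₂e (e \ W) (Finset.mem_image.mpr
              ⟨e, Finset.mem_filter.mpr ⟨heE, hze⟩, rfl⟩)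
        · have h1 : (if z = z then (1:ℝ) else if z ∈ V₂ then x₂ z else 0)
              ≤ ∑ v ∈ V, (if v = z then (1:ℝ) else if v ∈ V₂ then x₂ v else 0) := by
            apply Finset.single_le_sum
              (f := fun v => if v = z then (1:ℝ) else if v ∈ V₂ then x₂ v else 0)
            · intro i _
              exact hxnn i
            · exact hzV
          simpa using h1

end Aux

theorem stmt_10 {α : Type*} [DecidableEq α] (V : Finset α) (E : Finset (Finset α))
    (hE : ∀ e ∈ E, e ⊆ V) (h : OneSperner E)
    (hne : E ≠ ∅) (hne' : E ≠ ({∅} : Finset (Finset α))) :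
    ∃ x : α → ℝ, (∀ v ∈ V, 0 ≤ x v) ∧ (∀ e ∈ E, ∑ v ∈ e, x v = 1) ∧
      1 ≤ ∑ v ∈ V, x v := by
  exact aux_main V.card V E le_rfl hE h hne hne'
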